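/- Let n ≥ 2 be an integer, s ∈ [-n,0], and ν ∈ [-s/n, ν₀(n,s)] where ν₀(n,s) = ((3-2n)s+1-2n+sqrt((1-s)((4n-5)s+4n²-4n+1)))/(2(n-1)²). Set ϑ = -(s + (n-1)ν). Then -n ≤ s ≤ ϑ ≤ -s/n ≤ ν ≤ 1. -/
import Mathlib


/-- Let `n ≥ 2`, `s ∈ [-n,0]`, `ν ∈ [-s/n, ν₀(n,s)]` and `ϑ = -(s + (n-1)ν)`.
Then `-n ≤ s ≤ ϑ ≤ -s/n ≤ ν ≤ 1`. -/
theorem stmt13 (n : ℕ) (hn : 2 ≤ n) (s ν : ℝ) (hs0 : -(n:ℝ) ≤ s) (hs1 : s ≤ 0)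
    (hνl : -s/(n:ℝ) ≤ ν)
    (hνu : ν ≤ ((3 - 2*(n:ℝ))*s + 1 - 2*(n:ℝ) +
        Real.sqrt ((1 - s) * ((4*(n:ℝ) - 5)*s + 4*(n:ℝ)^2 - 4*(n:ℝ) + 1)))
      / (2*((n:ℝ) - 1)^2))
    (ϑ : ℝ) (hϑ : ϑ = -(s + ((n:ℝ) - 1)*ν)) :
    -(n:ℝ) ≤ s ∧ s ≤ ϑ ∧ ϑ ≤ -s/(n:ℝ) ∧ -s/(n:ℝ) ≤ ν ∧ ν ≤ 1 := by
  set N : ℝ := (n : ℝ) with hNdef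
  have hN : (2:ℝ) ≤ N := by rw [hNdef]; exact_mod_cast hn
  have hNpos : (0:ℝ) < N := by linarith
  have hden : (0:ℝ) < 2*(N-1)^2 := by nlinarith
  set A : ℝ := (1 - s) * ((4*N - 5)*s + 4*N^2 - 4*N + 1) with hAdef
  -- bound 1 : sqrt A ≤ (2N-1)(1-s)
  have hB1 : Real.sqrt A ≤ (2*N-1)*(1-s) := by
    have h1 : A ≤ ((2*N-1)*(1-s))^2 := by
      nlinarith [mul_nonneg (mul_nonneg (show (0:ℝ) ≤ -s by linarith)
        (show (0:ℝ) ≤ 1-s by linarith)) (show (0:ℝ) ≤ N^2-1 by nlinarith)]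
    calc Real.sqrt A ≤ Real.sqrt (((2*N-1)*(1-s))^2) := Real.sqrt_le_sqrt h1
      _ = (2*N-1)*(1-s) := Real.sqrt_sq (by nlinarith)
  -- bound 2 : sqrt A ≤ 2N²-2N+1+(2N-3)s
  have hB2 : Real.sqrt A ≤ 2*N^2 - 2*N + 1 + (2*N-3)*s := by
    have h1 : A ≤ (2*N^2 - 2*N + 1 + (2*N-3)*s)^2 := by
      nlinarith [sq_nonneg ((N-1)*(s+N))]
    calc Real.sqrt A ≤ Real.sqrt ((2*N^2 - 2*N + 1 + (2*N-3)*s)^2) := Real.sqrt_le_sqrt h1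
      _ = 2*N^2 - 2*N + 1 + (2*N-3)*s := Real.sqrt_sq (by nlinarith)
  have hkey : ν * (2*(N-1)^2) ≤ (3 - 2*N)*s + 1 - 2*N + Real.sqrt A := by
    rw [← le_div_iff₀ hden]; exact hνu
  have hνs : -s ≤ N * ν := by
    have := (div_le_iff₀ hNpos).mp hνl
    linarith
  refine ⟨hs0, ?_, ?_, hνl, ?_⟩
  · -- s ≤ ϑ : from key with bound 1 we get 2(N-1)²ν ≤ -4(N-1)s
    have h2 : ν * (2*(N-1)^2) ≤ -4*(N-1)*s := by nlinarith
    rw [hϑ]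
    nlinarith [h2]
  · -- ϑ ≤ -s/N
    rw [hϑ, le_div_iff₀ hNpos]
    nlinarith [mul_nonneg (show (0:ℝ) ≤ N-1 by linarith) (show (0:ℝ) ≤ N*ν + s by linarith)]
  · -- ν ≤ 1
    nlinarith
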